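/- Let f : ℝ → ℝ be defined by f(x) = log(1 + e^{x²/2}). Then f is twice differentiable with f''(x) = (1 + e^{−x²/2} + x² e^{−x²/2}) / (1 + e^{−x²/2})² for all x, and 1/2 ≤ f''(x) < 1.31 for all x ∈ ℝ. Consequently, f and its rescalings f_a(x) = f(ax) are strongly convex and smooth: f_a is (a²/2)-strongly convex and (1.31 a²)-smooth. -/

import Mathlib

/-- The building block `f(x) = log(1 + e^{x²/2})` of the periodic chaotic examples. -/
noncomputable def fLog (x : ℝ) : ℝ := Real.log (1 + Real.exp (x ^ 2 / 2))

open Real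

noncomputable def F1 (x : ℝ) : ℝ := x * exp (x ^ 2 / 2) / (1 + exp (x ^ 2 / 2))

noncomputable def F2 (x : ℝ) : ℝ :=
  (1 + exp (-x ^ 2 / 2) + x ^ 2 * exp (-x ^ 2 / 2)) / (1 + exp (-x ^ 2 / 2)) ^ 2

lemma hden (x : ℝ) : (0:ℝ) < 1 + exp (x ^ 2 / 2) := by positivity

lemma hF1 (x : ℝ) : HasDerivAt fLog (F1 x) x := by
  have h1 : HasDerivAt (fun x : ℝ => x ^ 2 / 2) x x := by
    simpa using ((hasDerivAt_pow 2 x).div_const 2)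
  have h2 : HasDerivAt (fun x : ℝ => 1 + exp (x ^ 2 / 2)) (x * exp (x ^ 2 / 2)) x := by
    simpa [mul_comm] using (h1.exp.const_add 1)
  rw [show fLog = fun y => Real.log (1 + exp (y ^ 2 / 2)) from rfl]
  simpa [F1, div_eq_mul_inv, mul_comm] using h2.log (ne_of_gt (hden x))

lemma hF2 (x : ℝ) : HasDerivAt F1 (F2 x) x := by
  have h1 : HasDerivAt (fun x : ℝ => x ^ 2 / 2) x x := by
    simpa using ((hasDerivAt_pow 2 x).div_const 2)
  have h2 : HasDerivAt (fun x : ℝ => 1 + exp (x ^ 2 / 2)) (x * exp (x ^ 2 / 2)) x := by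
    simpa [mul_comm] using (h1.exp.const_add 1)
  have hn : HasDerivAt (fun x : ℝ => x * exp (x ^ 2 / 2))
      (1 * exp (x ^ 2 / 2) + x * (x * exp (x ^ 2 / 2))) x := by
    exact (hasDerivAt_id x).mul (by simpa [mul_comm] using h1.exp)
  have h := hn.div h2 (ne_of_gt (hden x))
  refine h.congr_deriv ?_
  unfold F2
  have hE : exp (-x ^ 2 / 2) = (exp (x ^ 2 / 2))⁻¹ := by
    rw [← exp_neg]; ring_nf
  rw [hE]
  have hEne : exp (x ^ 2 / 2) ≠ 0 := (exp_pos _).ne'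
  have h1p : (1 : ℝ) + exp (x ^ 2 / 2) ≠ 0 := (hden x).ne'
  have h1p' : (1 : ℝ) + (exp (x ^ 2 / 2))⁻¹ ≠ 0 := by positivity
  field_simp
  ring

lemma deriv_fLog : deriv fLog = F1 := funext fun x => (hF1 x).deriv

lemma deriv2_fLog (x : ℝ) : deriv (deriv fLog) x = F2 x := by
  rw [deriv_fLog]; exact (hF2 x).deriv

lemma F2_lower (x : ℝ) : 1 / 2 ≤ F2 x := by
  have hs : (0:ℝ) < exp (-x ^ 2 / 2) := exp_pos _
  have hs1 : exp (-x ^ 2 / 2) ≤ 1 := by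
    rw [exp_le_one_iff]; nlinarith [sq_nonneg x]
  unfold F2
  rw [le_div_iff₀ (by positivity)]
  nlinarith [mul_nonneg (sq_nonneg x) hs.le]

lemma exp_neg_two_lt : exp (-2 : ℝ) < 0.13536 := by
  have h1 := Real.exp_one_gt_d9
  have h2 : (7.389:ℝ) < exp 2 := by
    rw [show (2:ℝ) = 1 + 1 by norm_num, exp_add]; nlinarith
  have hm : exp (-2 : ℝ) * exp 2 = 1 := by rw [← exp_add]; norm_num
  nlinarith [exp_pos (-2 : ℝ)]

lemma F2_upper (x : ℝ) : F2 x < 1.31 := by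
  set s := exp (-x ^ 2 / 2) with hsdef
  set u := exp (x ^ 2 / 2) with hudef
  have hs : (0:ℝ) < s := exp_pos _
  have hu : (0:ℝ) < u := exp_pos _
  have hsu : s * u = 1 := by rw [hsdef, hudef, ← exp_add]; ring_nf; exact exp_zero
  have htu : x ^ 2 / 2 - 2 + 1 ≤ u * exp (-2 : ℝ) := by
    have h := Real.add_one_le_exp (x ^ 2 / 2 - 2)
    rwa [show x ^ 2 / 2 - 2 = x ^ 2 / 2 + (-2) by ring, exp_add] at h
  have hE2 := exp_neg_two_lt
  have hts : x ^ 2 * s ≤ 2 * exp (-2 : ℝ) + 2 * s := by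
    nlinarith [mul_le_mul_of_nonneg_right htu hs.le]
  have hE2pos := exp_pos (-2 : ℝ)
  unfold F2
  rw [div_lt_iff₀ (by positivity)]
  nlinarith [hts, sq_nonneg (s - 29/200)]

lemma F2_bounds (x : ℝ) : 1 / 2 ≤ F2 x ∧ F2 x < 1.31 := ⟨F2_lower x, F2_upper x⟩

/-- **Curvature bounds for `f(x) = log(1 + e^{x²/2})`** (used in
Observation 1 of the paper). `f` is twice differentiable with
`f''(x) = (1 + e^{-x²/2} + x² e^{-x²/2}) / (1 + e^{-x²/2})²`, and
`1/2 ≤ f''(x) < 1.31` for all `x`; consequently the rescaling `f_a(x) = f(a x)` is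
`(a²/2)`-strongly convex and `(1.31 a²)`-smooth (second derivative between `a²/2`
and `1.31 a²`). -/
theorem stmt17 :
    ContDiff ℝ 2 fLog ∧
    (∀ x : ℝ, deriv (deriv fLog) x =
      (1 + Real.exp (-x ^ 2 / 2) + x ^ 2 * Real.exp (-x ^ 2 / 2)) /
        (1 + Real.exp (-x ^ 2 / 2)) ^ 2) ∧
    (∀ x : ℝ, 1 / 2 ≤ deriv (deriv fLog) x ∧ deriv (deriv fLog) x < 1.31) ∧
    (∀ a x : ℝ,
      a ^ 2 / 2 ≤ deriv (deriv fun y => fLog (a * y)) x ∧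
      deriv (deriv fun y => fLog (a * y)) x ≤ 1.31 * a ^ 2) := by
  refine ⟨?_, ?_, ?_, ?_⟩
  · have h : ContDiff ℝ 2 fun x : ℝ => 1 + exp (x ^ 2 / 2) :=
      contDiff_const.add (ContDiff.exp ((contDiff_id.pow 2).div_const 2))
    exact h.log fun x => (hden x).ne'
  · exact fun x => deriv2_fLog x
  · exact fun x => by rw [deriv2_fLog]; exact F2_bounds x
  · intro a x
    have hlin : ∀ y : ℝ, HasDerivAt (fun y : ℝ => a * y) a y := fun y => by
      simpa using (hasDerivAt_id y).const_mul a
    have hG1 : ∀ y : ℝ, HasDerivAt (fun y => fLog (a * y)) (F1 (a * y) * a) y :=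
      fun y => (hF1 (a * y)).comp y (hlin y)
    have hd1 : (deriv fun y => fLog (a * y)) = fun y => F1 (a * y) * a :=
      funext fun y => (hG1 y).deriv
    have hG2 : HasDerivAt (fun y => F1 (a * y) * a) (F2 (a * x) * a * a) x :=
      ((hF2 (a * x)).comp x (hlin x)).mul_const a
    have hd2 : deriv (deriv fun y => fLog (a * y)) x = F2 (a * x) * a * a := by
      rw [hd1]; exact hG2.deriv
    obtain ⟨hl, hr⟩ := F2_bounds (a * x)
    rw [hd2]
    constructor <;> nlinarith [sq_nonneg a]
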